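/- There exists a maximal eventually different family 𝒜 ⊆ ω^ω which is not s-measurable. -/

import Mathlib

open Cardinal Set

/-- A tree on ω: a nonempty set of finite sequences closed under initial segments. -/
def IsTree (T : Set (List ℕ)) : Prop :=
  T.Nonempty ∧ ∀ s ∈ T, ∀ n : ℕ, s.take n ∈ T

/-- The body of a tree: all infinite branches. -/
def treeBody (T : Set (List ℕ)) : Set (ℕ → ℕ) :=
  {x | ∀ n : ℕ, (List.ofFn fun i : Fin n => x i) ∈ T}

/-- Immediate successors of a node in a tree. -/
def succs (T : Set (List ℕ)) (t : List ℕ) : Set ℕ := {n | t ++ [n] ∈ T}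

/-- Sacks (perfect) tree: every node has an extension with at least two immediate successors. -/
def IsSacksTree (T : Set (List ℕ)) : Prop :=
  IsTree T ∧ ∀ s ∈ T, ∃ t ∈ T, s <+: t ∧ (succs T t).Nontrivial

/-- Miller tree: every node has an extension with infinitely many immediate successors. -/
def IsMillerTree (T : Set (List ℕ)) : Prop :=
  IsTree T ∧ ∀ s ∈ T, ∃ t ∈ T, s <+: t ∧ (succs T t).Infinite

/-- Laver tree: has a stem (a node comparable with every node) such that every node
extending the stem has infinitely many immediate successors. -/
def IsLaverTree (T : Set (List ℕ)) : Prop :=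
  IsTree T ∧ ∃ s ∈ T, (∀ t ∈ T, s <+: t ∨ t <+: s) ∧
    ∀ t ∈ T, s <+: t → (succs T t).Infinite

/-- Complete Laver tree: every node has infinitely many immediate successors. -/
def IsCompleteLaverTree (T : Set (List ℕ)) : Prop :=
  IsTree T ∧ ∀ t ∈ T, (succs T t).Infinite

/-- The tree ideal t₀ associated with a family of trees 𝕋. -/
def treeIdeal (𝕋 : Set (Set (List ℕ))) : Set (Set (ℕ → ℕ)) :=
  {A | ∀ P ∈ 𝕋, ∃ Q ∈ 𝕋, Q ⊆ P ∧ treeBody Q ∩ A = ∅}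

/-- t-measurability with respect to a family of trees 𝕋. -/
def TMeasurable (𝕋 : Set (Set (List ℕ))) (A : Set (ℕ → ℕ)) : Prop :=
  ∀ P ∈ 𝕋, ∃ Q ∈ 𝕋, Q ⊆ P ∧ (treeBody Q ⊆ A ∨ treeBody Q ∩ A = ∅)

/-- 𝕋-Bernstein set: meets and omits the body of every tree in 𝕋. -/
def TBernstein (𝕋 : Set (Set (List ℕ))) (B : Set (ℕ → ℕ)) : Prop :=
  ∀ T ∈ 𝕋, (B ∩ treeBody T).Nonempty ∧ (B \ treeBody T).Nonempty

/-- Eventually different family. -/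
def EDFamily (A : Set (ℕ → ℕ)) : Prop :=
  ∀ f ∈ A, ∀ g ∈ A, f ≠ g → {n : ℕ | f n = g n}.Finite

/-- Maximal eventually different family. -/
def MEDFamily (A : Set (ℕ → ℕ)) : Prop :=
  EDFamily A ∧ ∀ B : Set (ℕ → ℕ), A ⊂ B → ¬ EDFamily B

namespace Stmt18Aux


noncomputable section

/-- value coding a binary string -/
def vl (σ : List Bool) : ℕ := 2 * Encodable.encode σ + 2

lemma vl_inj : Function.Injective vl := by
  intro a b h
  have : Encodable.encode a = Encodable.encode b := by unfold vl at h; omega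
  exact Encodable.encode_injective this

/-- the node of the coded tree corresponding to a binary string -/
def eL (σ : List Bool) : List ℕ := List.ofFn (fun i : Fin σ.length => vl (σ.take (i + 1)))

@[simp] lemma eL_length (σ : List Bool) : (eL σ).length = σ.length := by simp [eL]

lemma eL_getElem (σ : List Bool) (i : ℕ) (h : i < (eL σ).length) :
    (eL σ)[i] = vl (σ.take (i + 1)) := by
  simp [eL]

lemma eL_take (σ : List Bool) (n : ℕ) : (eL σ).take n = eL (σ.take n) := by
  apply List.ext_getElem
  · simp [Nat.min_comm]
  · intro i h1 h2
    rw [List.getElem_take, eL_getElem, eL_getElem, List.take_take]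
    congr 2
    have : i < σ.length ∧ i < n := by
      constructor <;> [skip; skip] <;> simp at h1 <;> omega
    rw [min_eq_left (by omega)]

lemma eL_concat (σ : List Bool) (d : Bool) :
    eL (σ ++ [d]) = eL σ ++ [vl (σ ++ [d])] := by
  apply List.ext_getElem
  · simp
  · intro i h1 h2
    rw [eL_getElem]
    rcases Nat.lt_or_ge i σ.length with hi | hi
    · rw [List.getElem_append_left (by simpa using hi), eL_getElem,
        List.take_append_of_le_length (by omega)]
    · have hie : i = σ.length := by simp at h1; omega
      subst hie
      rw [List.take_of_length_le (by simp)]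
      have : (eL σ ++ [vl (σ ++ [d])])[σ.length]'(by simp) = vl (σ ++ [d]) := by
        rw [List.getElem_append_right (by simp)]
        simp
      exact this.symm


def Pstar : Set (List ℕ) := Set.range eL

lemma Pstar_tree : IsTree Pstar := by
  constructor
  · exact ⟨eL [], ⟨[], rfl⟩⟩
  · rintro s ⟨σ, rfl⟩ n
    exact ⟨σ.take n, (eL_take σ n).symm⟩

lemma Pstar_sacks : IsSacksTree Pstar := by
  refine ⟨Pstar_tree, ?_⟩
  rintro s ⟨σ, rfl⟩
  refine ⟨eL σ, ⟨σ, rfl⟩, List.prefix_refl _, ?_⟩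
  refine ⟨vl (σ ++ [false]), ?_, vl (σ ++ [true]), ?_, ?_⟩
  · exact ⟨σ ++ [false], eL_concat σ false⟩
  · exact ⟨σ ++ [true], eL_concat σ true⟩
  · intro h
    have := vl_inj h
    simp at this

/-- the (n+1)-prefix analysis of a branch -/
lemma mem_body_spec {x : ℕ → ℕ} (hx : x ∈ treeBody Pstar) (n : ℕ) :
    ∃ σ : List Bool, σ.length = n + 1 ∧
      (List.ofFn fun i : Fin (n + 1) => x i) = eL σ ∧ x n = vl σ := by
  obtain ⟨σ, hσ⟩ := hx (n + 1)
  have hlen : σ.length = n + 1 := by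
    have := congrArg List.length hσ
    simpa using this
  refine ⟨σ, hlen, hσ.symm, ?_⟩
  have h1 : x n = (List.ofFn fun i : Fin (n + 1) => x i)[n]'(by simp) := by
    rw [List.getElem_ofFn]
  have h3 : (eL σ)[n]'(by simp; omega) = (List.ofFn fun i : Fin (n + 1) => x i)[n]'(by simp) :=
    List.getElem_of_eq hσ (by simp; omega)
  have h2 : (eL σ)[n]'(by simp; omega) = vl σ := by
    rw [eL_getElem]
    congr 1
    rw [← hlen, List.take_length]
  rw [h1, ← h3, h2]

lemma body_agree {x y : ℕ → ℕ} (hx : x ∈ treeBody Pstar) (hy : y ∈ treeBody Pstar)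
    {n : ℕ} (h : x n = y n) : ∀ m ≤ n, x m = y m := by
  obtain ⟨σ, hσl, hσ, hσv⟩ := mem_body_spec hx n
  obtain ⟨τ, hτl, hτ, hτv⟩ := mem_body_spec hy n
  have hστ : σ = τ := vl_inj (by rw [← hσv, ← hτv, h])
  intro m hm
  have hl : (List.ofFn fun i : Fin (n + 1) => x i) = List.ofFn fun i : Fin (n + 1) => y i := by
    rw [hσ, hτ, hστ]
  have h4 := List.getElem_of_eq hl (i := m) (by simp; omega)
  rwa [List.getElem_ofFn, List.getElem_ofFn] at h4

lemma body_ed {x y : ℕ → ℕ} (hx : x ∈ treeBody Pstar) (hy : y ∈ treeBody Pstar)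
    (h : {n | x n = y n}.Infinite) : x = y := by
  funext m
  obtain ⟨n, hn, hmn⟩ := h.exists_gt m
  exact body_agree hx hy hn m (le_of_lt hmn)

lemma body_parity {x : ℕ → ℕ} (hx : x ∈ treeBody Pstar) (n : ℕ) : x n % 2 = 0 := by
  obtain ⟨σ, -, -, hv⟩ := mem_body_spec hx n
  rw [hv]; unfold vl; omega

/-- next to a branch x, a conflicting function agreeing on evens and coding prefixes on odds -/
def w (x : ℕ → ℕ) : ℕ → ℕ := fun n =>
  if n % 2 = 0 then x n else 2 * Encodable.encode (List.ofFn fun i : Fin n => x i) + 1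

lemma w_odd_odd (x : ℕ → ℕ) {n : ℕ} (h : n % 2 = 1) : w x n % 2 = 1 := by
  unfold w; rw [if_neg (by omega)]; omega

lemma w_even (x : ℕ → ℕ) {n : ℕ} (h : n % 2 = 0) : w x n = x n := by
  unfold w; rw [if_pos h]

lemma w_agree {x y : ℕ → ℕ} (hx : x ∈ treeBody Pstar) (hy : y ∈ treeBody Pstar)
    {n : ℕ} (h : w x n = w y n) : ∀ m < n, x m = y m := by
  intro m hm
  unfold w at h
  by_cases hpar : n % 2 = 0
  · rw [if_pos hpar, if_pos hpar] at h
    exact body_agree hx hy h m (le_of_lt hm)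
  · rw [if_neg hpar, if_neg hpar] at h
    have henc : (List.ofFn fun i : Fin n => x i) = List.ofFn fun i : Fin n => y i :=
      Encodable.encode_injective (by omega)
    have h4 := List.getElem_of_eq henc (i := m) (by simp; omega)
    rwa [List.getElem_ofFn, List.getElem_ofFn] at h4

lemma w_ed {x y : ℕ → ℕ} (hx : x ∈ treeBody Pstar) (hy : y ∈ treeBody Pstar)
    (h : {n | w x n = w y n}.Infinite) : x = y := by
  funext m
  obtain ⟨n, hn, hmn⟩ := h.exists_gt m
  exact w_agree hx hy hn m hmn

lemma w_mixed {z x : ℕ → ℕ} (hz : z ∈ treeBody Pstar) (hx : x ∈ treeBody Pstar)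
    (h : {n | z n = w x n}.Infinite) : z = x := by
  have hsub : {n | z n = w x n} ⊆ {n | z n = x n} := by
    intro n hn
    simp only [mem_setOf_eq] at hn ⊢
    by_cases hpar : n % 2 = 0
    · rw [w_even x hpar] at hn; exact hn
    · exfalso
      have h1 := body_parity hz n
      have h2 := w_odd_odd x (n := n) (by omega)
      omega
  exact body_ed hz hx (h.mono hsub)

lemma w_ne {z x : ℕ → ℕ} (hz : z ∈ treeBody Pstar) : z ≠ w x := by
  intro h
  have h1 := body_parity hz 1
  have h2 := w_odd_odd x (n := 1) (by omega)
  rw [← h] at h2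
  omega

lemma w_agree_infinite (x : ℕ → ℕ) : {n | x n = w x n}.Infinite := by
  apply Set.infinite_of_injective_forall_mem (f := fun k : ℕ => 2 * k)
  · intro a b h; simp only at h; omega
  · intro k
    simp only [mem_setOf_eq]
    rw [w_even x (by omega)]


lemma prefix_getD {l l' : List ℕ} (h : l <+: l') {i : ℕ} (hi : i < l.length) :
    l'.getD i 0 = l.getD i 0 := by
  obtain ⟨r, rfl⟩ := h
  rw [List.getD_eq_getElem _ _ (by simp; omega), List.getD_eq_getElem _ _ hi,
    List.getElem_append_left hi]

lemma sacks_body_card {Q : Set (List ℕ)} (hQ : IsSacksTree Q) :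
    Cardinal.continuum ≤ #(treeBody Q) := by
  classical
  obtain ⟨⟨⟨s0, hs0⟩, htake⟩, hsplit⟩ := hQ
  have hnil : [] ∈ Q := by have := htake s0 hs0 0; simpa using this
  have hstep : ∀ l : {l // l ∈ Q}, ∃ t : List ℕ, ∃ a b : ℕ,
      l.1 <+: t ∧ a ≠ b ∧ t ++ [a] ∈ Q ∧ t ++ [b] ∈ Q := by
    rintro ⟨l, hl⟩
    obtain ⟨t, ht, hpre, a, ha, b, hb, hab⟩ := hsplit l hl
    exact ⟨t, a, b, hpre, hab, ha, hb⟩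
  choose T ca cb hpre hne hc1 hc2 using hstep
  let step : {l // l ∈ Q} → Bool → {l // l ∈ Q} := fun s d =>
    if d then ⟨T s ++ [ca s], hc1 s⟩ else ⟨T s ++ [cb s], hc2 s⟩
  have step_pre : ∀ s d, s.1 <+: (step s d).1 := by
    intro s d
    have h1 : (T s) <+: (step s d).1 := by
      cases d <;> simp only [step, if_true, if_false] <;> exact ⟨_, rfl⟩
    exact (hpre s).trans h1
  have step_len : ∀ s d, (step s d).1.length = (T s).length + 1 := by
    intro s d; cases d <;> simp [step]
  have step_len' : ∀ s d, s.1.length < (step s d).1.length := by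
    intro s d
    have := (hpre s).length_le
    rw [step_len]; omega
  let M : (ℕ → Bool) → ℕ → {l // l ∈ Q} := fun u n =>
    Nat.rec ⟨[], hnil⟩ (fun k prev => step prev (u k)) n
  have hM0 : ∀ u, M u 0 = ⟨[], hnil⟩ := fun _ => rfl
  have hMs : ∀ u n, M u (n + 1) = step (M u n) (u n) := fun _ _ => rfl
  have chain : ∀ u {n m}, n ≤ m → (M u n).1 <+: (M u m).1 := by
    intro u n m h
    induction m with
    | zero => rw [Nat.le_zero.mp h]
    | succ k ih =>
      rcases Nat.lt_or_ge n (k+1) with h' | h'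
      · exact (ih (by omega)).trans (step_pre _ _)
      · have : n = k + 1 := by omega
        rw [this]
  have mlen : ∀ u n, n ≤ (M u n).1.length := by
    intro u n
    induction n with
    | zero => omega
    | succ k ih =>
      have h1 := step_len' (M u k) (u k)
      have h2 : M u (k + 1) = step (M u k) (u k) := hMs u k
      rw [h2]; omega
  have mlocal : ∀ {u v : ℕ → Bool} (n : ℕ), (∀ k < n, u k = v k) → M u n = M v n := by
    intro u v n h
    induction n with
    | zero => rfl
    | succ k ih =>
      rw [hMs, hMs, ih (fun j hj => h j (by omega)), h k (by omega)]
  have stable : ∀ (u : ℕ → Bool) {n m i : ℕ}, n ≤ m → i < (M u n).1.length →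
      (M u m).1.getD i 0 = (M u n).1.getD i 0 :=
    fun u {n m i} h hi => prefix_getD (chain u h) hi
  let X : (ℕ → Bool) → ℕ → ℕ := fun u n => (M u (n + 1)).1.getD n 0
  have coher : ∀ u n i, i < n → (M u n).1.getD i 0 = X u i := by
    intro u n i h
    exact stable u (n := i + 1) (m := n) h (by have := mlen u (i + 1); omega)
  have hmem : ∀ u, X u ∈ treeBody Q := by
    intro u n
    have hl : (List.ofFn fun i : Fin n => X u i) = (M u n).1.take n := by
      apply List.ext_getElem
      · simp [min_eq_left (mlen u n)]
      · intro i h1 h2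
        have hi : i < n := by simpa using h1
        simp only [List.getElem_ofFn, List.getElem_take]
        rw [← coher u n i hi]
        exact List.getD_eq_getElem ((M u n).1) 0 (show i < (M u n).1.length by
          have := mlen u n; omega)
    show (List.ofFn fun i : Fin n => X u i) ∈ Q
    rw [hl]
    exact htake _ (M u n).2 n
  have hinj : Function.Injective X := by
    intro u v huv
    by_contra hne'
    have hex : ∃ k, u k ≠ v k := Function.ne_iff.mp hne'
    set n0 := Nat.find hex with hn0def
    have hn0 : u n0 ≠ v n0 := Nat.find_spec hex
    have hlt : ∀ j < n0, u j = v j := fun j hj => not_not.mp (Nat.find_min hex hj)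
    have hMeq : M u n0 = M v n0 := mlocal n0 hlt
    set s := M u n0 with hsdef
    set L := (T s).length with hLdef
    have key : ∀ (w : ℕ → Bool), M w n0 = s → X w L = (if w n0 then ca s else cb s) := by
      intro w hw
      have h1 : M w (n0 + 1) = step s (w n0) := by rw [hMs, hw]
      have hlen1 : (M w (n0 + 1)).1.length = L + 1 := by rw [h1, step_len]
      have h2 : (M w (n0 + 1)).1.getD L 0 = (if w n0 then ca s else cb s) := by
        rw [h1]
        cases hwn : w n0 <;> simp only [step, if_true, if_false, Bool.false_eq_true] <;>
          rw [List.getD_eq_getElem _ _ (by simp [hLdef])] <;>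
          simp [hLdef]
      rcases le_total (n0 + 1) (L + 1) with hcase | hcase
      · have h3 := stable w (n := n0 + 1) (m := L + 1) (i := L) hcase
          (by rw [hlen1]; omega)
        show (M w (L + 1)).1.getD L 0 = _
        rw [h3, h2]
      · have h3 := stable w (n := L + 1) (m := n0 + 1) (i := L) hcase
          (lt_of_lt_of_le (Nat.lt_succ_self L) (mlen w (L + 1)))
        show (M w (L + 1)).1.getD L 0 = _
        rw [← h3, h2]
    have k1 := key u rfl
    have k2 := key v hMeq.symm
    rw [huv] at k1
    rw [k1] at k2
    cases hu : u n0 <;> cases hv : v n0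
    · exact hn0 (by rw [hu, hv])
    · rw [hu, hv] at k2; simp at k2; exact hne s k2.symm
    · rw [hu, hv] at k2; simp at k2; exact hne s k2
    · exact hn0 (by rw [hu, hv])
  have hcont : Cardinal.continuum = #(ℕ → Bool) := by
    rw [← Cardinal.power_def, Cardinal.mk_bool, Cardinal.mk_nat, Cardinal.two_power_aleph0]
  rw [hcont]
  exact Cardinal.mk_le_of_injective
    (f := fun u => (⟨X u, hmem u⟩ : ↥(treeBody Q)))
    (fun a b h => hinj (congrArg Subtype.val h))


abbrev II : Type := (Cardinal.ord Cardinal.continuum).ToType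

lemma nonempty_diff_of_lt {α : Type} {s t : Set α} (h : #t < #s) : (s \ t).Nonempty := by
  rw [Set.nonempty_iff_ne_empty]
  intro he
  have hsub : s ⊆ t := by
    intro x hx
    by_contra hn
    have : x ∈ s \ t := ⟨hx, hn⟩
    rw [he] at this
    exact this
  exact absurd (Cardinal.mk_le_mk_of_subset hsub) (not_le.2 h)

lemma pair_selection (S : II → Set (ℕ → ℕ)) (hS : ∀ i, Cardinal.continuum ≤ #(S i)) :
    ∃ f g : II → (ℕ → ℕ), ∀ i, f i ∈ S i ∧ g i ∈ S i ∧ ∀ j, f i ≠ g j := by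
  classical
  have wf : WellFounded ((· < ·) : II → II → Prop) := IsWellFounded.wf
  have ex : ∀ (i : II) (G : ∀ j, j < i → (ℕ → ℕ) × (ℕ → ℕ)),
      ∃ p : (ℕ → ℕ) × (ℕ → ℕ), p.1 ∈ S i ∧ p.2 ∈ S i ∧ p.1 ≠ p.2 ∧
        ∀ j (hj : j < i), p.1 ≠ (G j hj).1 ∧ p.1 ≠ (G j hj).2 ∧
          p.2 ≠ (G j hj).1 ∧ p.2 ≠ (G j hj).2 := by
    intro i G
    set bad : Set (ℕ → ℕ) :=
      (Set.range fun j : Set.Iio i => (G j.1 j.2).1) ∪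
      (Set.range fun j : Set.Iio i => (G j.1 j.2).2) with hbaddef
    have hsmall : #bad < Cardinal.continuum := by
      apply lt_of_le_of_lt (Cardinal.mk_union_le _ _)
      have h1 := Cardinal.mk_range_le (f := fun j : Set.Iio i => (G j.1 j.2).1)
      have h2 := Cardinal.mk_range_le (f := fun j : Set.Iio i => (G j.1 j.2).2)
      have hIio : #(Set.Iio i) < Cardinal.continuum := Cardinal.mk_Iio_ord_toType i
      exact Cardinal.add_lt_of_lt Cardinal.aleph0_le_continuum
        (lt_of_le_of_lt h1 hIio) (lt_of_le_of_lt h2 hIio)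
    obtain ⟨a, haS, haB⟩ := nonempty_diff_of_lt (lt_of_lt_of_le hsmall (hS i))
    have hsmall2 : #(bad ∪ {a} : Set (ℕ → ℕ)) < Cardinal.continuum := by
      apply lt_of_le_of_lt (Cardinal.mk_union_le _ _)
      refine Cardinal.add_lt_of_lt Cardinal.aleph0_le_continuum hsmall ?_
      have h1 : #({a} : Set (ℕ → ℕ)) = 1 := Cardinal.mk_singleton a
      rw [h1]
      exact lt_of_lt_of_le Cardinal.one_lt_aleph0 Cardinal.aleph0_le_continuum
    obtain ⟨b, hbS, hbB⟩ := nonempty_diff_of_lt (lt_of_lt_of_le hsmall2 (hS i))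
    refine ⟨(a, b), haS, hbS, ?_, ?_⟩
    · intro h
      simp only at h
      exact hbB (Or.inr (by rw [← h]; exact rfl))
    · intro j hj
      have hamem : ∀ k : ((ℕ → ℕ) × (ℕ → ℕ)) → (ℕ → ℕ), (k = Prod.fst ∨ k = Prod.snd) →
        a ≠ k (G j hj) := by
        rintro k (rfl | rfl) h
        · exact haB (Or.inl ⟨⟨j, hj⟩, h.symm⟩)
        · exact haB (Or.inr ⟨⟨j, hj⟩, h.symm⟩)
      have hbmem : ∀ k : ((ℕ → ℕ) × (ℕ → ℕ)) → (ℕ → ℕ), (k = Prod.fst ∨ k = Prod.snd) →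
        b ≠ k (G j hj) := by
        rintro k (rfl | rfl) h
        · exact hbB (Or.inl (Or.inl ⟨⟨j, hj⟩, h.symm⟩))
        · exact hbB (Or.inl (Or.inr ⟨⟨j, hj⟩, h.symm⟩))
      exact ⟨hamem _ (Or.inl rfl), hamem _ (Or.inr rfl),
        hbmem _ (Or.inl rfl), hbmem _ (Or.inr rfl)⟩
  let F : II → (ℕ → ℕ) × (ℕ → ℕ) := wf.fix (fun i G => Classical.choose (ex i G))
  have hF : ∀ i, F i = Classical.choose (ex i (fun j _ => F j)) := fun i =>
    WellFounded.fix_eq wf _ i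
  have spec : ∀ i, (F i).1 ∈ S i ∧ (F i).2 ∈ S i ∧ (F i).1 ≠ (F i).2 ∧
      ∀ j (hj : j < i), (F i).1 ≠ (F j).1 ∧ (F i).1 ≠ (F j).2 ∧
        (F i).2 ≠ (F j).1 ∧ (F i).2 ≠ (F j).2 := by
    intro i
    have := Classical.choose_spec (ex i (fun j _ => F j))
    rw [← hF i] at this
    exact this
  refine ⟨fun i => (F i).1, fun i => (F i).2, fun i => ⟨(spec i).1, (spec i).2.1, ?_⟩⟩
  intro j
  rcases lt_trichotomy i j with h | h | h
  · intro he
    simp only at he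
    exact ((spec j).2.2.2 i h).2.2.1 he.symm
  · rw [h]; exact (spec j).2.2.1
  · exact ((spec i).2.2.2 j h).2.1



theorem main_aux : ∃ A : Set (ℕ → ℕ), MEDFamily A ∧ ¬ TMeasurable {T | IsSacksTree T} A := by
  classical
  have hIIcard : #II = Cardinal.continuum := by rw [Cardinal.mk_toType, Cardinal.card_ord]
  have hTsk : #{Q : Set (List ℕ) // IsSacksTree Q ∧ Q ⊆ Pstar} ≤ #II := by
    rw [hIIcard]
    refine le_trans (Cardinal.mk_subtype_le _) ?_
    rw [Cardinal.mk_set, Cardinal.mk_list_eq_aleph0, Cardinal.two_power_aleph0]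
  obtain ⟨emb⟩ := (Cardinal.le_def _ _).mp hTsk
  have dflt : {Q : Set (List ℕ) // IsSacksTree Q ∧ Q ⊆ Pstar} := ⟨Pstar, Pstar_sacks, subset_rfl⟩
  let task : II → {Q : Set (List ℕ) // IsSacksTree Q ∧ Q ⊆ Pstar} := fun i =>
    if h : ∃ t, emb t = i then h.choose else dflt
  have htask : ∀ t, task (emb t) = t := by
    intro t
    have h : ∃ t', emb t' = emb t := ⟨t, rfl⟩
    simp only [task, dif_pos h]
    exact emb.injective h.choose_spec
  set S : II → Set (ℕ → ℕ) := fun i => treeBody (task i).1 with hSdef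
  obtain ⟨f, g, hfg⟩ := pair_selection S (fun i => sacks_body_card (task i).2.1)
  have hfP : ∀ i, f i ∈ treeBody Pstar := fun i n => (task i).2.2 ((hfg i).1 n)
  have hgP : ∀ i, g i ∈ treeBody Pstar := fun i n => (task i).2.2 ((hfg i).2.1 n)
  set E : Set (ℕ → ℕ) := Set.range f ∪ (w '' Set.range g) with hEdef
  have hEED : EDFamily E := by
    intro p hp q hq hne
    rw [← Set.not_infinite]
    intro hinf
    rcases hp with ⟨i, rfl⟩ | ⟨x, ⟨i, rfl⟩, rfl⟩ <;> rcases hq with ⟨j, rfl⟩ | ⟨y, ⟨j, rfl⟩, rfl⟩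
    · exact hne (body_ed (hfP i) (hfP j) hinf)
    · exact (hfg i).2.2 j (w_mixed (hfP i) (hgP j) hinf)
    · have hinf' : {n | f j n = w (g i) n}.Infinite := by
        have hsets : {n | w (g i) n = f j n} = {n | f j n = w (g i) n} := by
          ext n; exact eq_comm
        rwa [hsets] at hinf
      exact (hfg j).2.2 i (w_mixed (hfP j) (hgP i) hinf')
    · exact hne (congrArg w (w_ed (hgP i) (hgP j) hinf))
  have hchain : ∀ c ⊆ {C : Set (ℕ → ℕ) | EDFamily C}, IsChain (· ⊆ ·) c → c.Nonempty →
      ∃ ub ∈ {C : Set (ℕ → ℕ) | EDFamily C}, ∀ s ∈ c, s ⊆ ub := by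
    intro c hc hch hcne
    refine ⟨⋃₀ c, ?_, fun s hs => subset_sUnion_of_mem hs⟩
    intro p hp q hq hpq
    obtain ⟨C1, hC1, hp1⟩ := hp
    obtain ⟨C2, hC2, hq2⟩ := hq
    rcases eq_or_ne C1 C2 with rfl | hne'
    · exact hc hC1 p hp1 q hq2 hpq
    · rcases hch hC1 hC2 hne' with h | h
      · exact hc hC2 p (h hp1) q hq2 hpq
      · exact hc hC1 p hp1 q (h hq2) hpq
  obtain ⟨A, hEA, hmax⟩ := zorn_subset_nonempty {C : Set (ℕ → ℕ) | EDFamily C} hchain E hEED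
  have hAED : EDFamily A := hmax.1
  have hfA : ∀ i, f i ∈ A := fun i => hEA (Or.inl ⟨i, rfl⟩)
  have hwgA : ∀ i, w (g i) ∈ A := fun i => hEA (Or.inr ⟨g i, ⟨i, rfl⟩, rfl⟩)
  have hgA : ∀ i, g i ∉ A := by
    intro i hg
    have hne := w_ne (hgP i) (x := g i)
    have hfin := hAED (g i) hg (w (g i)) (hwgA i) hne
    exact (w_agree_infinite (g i)) hfin
  refine ⟨A, ⟨hAED, ?_⟩, ?_⟩
  · intro B hAB hBED
    exact hAB.not_subset (hmax.2 hBED hAB.subset)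
  · intro hmeas
    obtain ⟨Q, hQS, hQsub, hcase⟩ := hmeas Pstar Pstar_sacks
    set t : {Q : Set (List ℕ) // IsSacksTree Q ∧ Q ⊆ Pstar} := ⟨Q, hQS, hQsub⟩ with htdef
    have hf : f (emb t) ∈ treeBody Q := by
      have h1 := (hfg (emb t)).1
      rw [hSdef] at h1
      simp only at h1
      rw [htask t] at h1
      exact h1
    have hg : g (emb t) ∈ treeBody Q := by
      have h1 := (hfg (emb t)).2.1
      rw [hSdef] at h1
      simp only at h1
      rw [htask t] at h1
      exact h1
    rcases hcase with hsub | hdisj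
    · exact hgA (emb t) (hsub hg)
    · have hmem : f (emb t) ∈ treeBody Q ∩ A := ⟨hf, hfA (emb t)⟩
      rw [hdisj] at hmem
      exact hmem

end
end Stmt18Aux

/-- there is an s-nonmeasurable m.e.d. family. -/
theorem stmt18 :
    ∃ A : Set (ℕ → ℕ), MEDFamily A ∧ ¬ TMeasurable {T | IsSacksTree T} A :=
  Stmt18Aux.main_aux
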